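/- Let φ : E₁ → E₂ be a bijective L-map between ground spaces of q-matroids M₁ = (E₁, ρ₁) and M₂ = (E₂, ρ₂). Then the following are equivalent: (i) both φ and φ⁻¹ are weak maps; (ii) φ is rank-preserving (ρ₂(φ(V)) = ρ₁(V) for all V); (iii) both φ and φ⁻¹ are strong maps. -/

import Mathlib

open Submodule Module

/-- An `L`-map: a map between `F`-vector spaces that maps every subspace onto a subspace. -/
def IsLMap (F : Type*) [Field F] {E₁ E₂ : Type*} [AddCommGroup E₁] [Module F E₁]
    [AddCommGroup E₂] [Module F E₂] (φ : E₁ → E₂) : Prop :=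
  ∀ V : Submodule F E₁, ∃ W : Submodule F E₂, φ '' (V : Set E₁) = (W : Set E₂)

/-- A `q`-matroid rank function: dimension-bounded, monotone, submodular. -/
def IsQMatroid {F E : Type*} [Field F] [AddCommGroup E] [Module F E]
    (ρ : Submodule F E → ℕ) : Prop :=
  (∀ V, ρ V ≤ finrank F V) ∧ (∀ V W, V ≤ W → ρ V ≤ ρ W) ∧
  (∀ V W, ρ (V ⊔ W) + ρ (V ⊓ W) ≤ ρ V + ρ W)

/-- A flat: a subspace whose rank increases under any strict enlargement. -/
def IsFlat {F E : Type*} [Field F] [AddCommGroup E] [Module F E]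
    (ρ : Submodule F E → ℕ) (V : Submodule F E) : Prop :=
  ∀ W : Submodule F E, V < W → ρ V < ρ W

/-- A weak map: the rank of the image of any subspace does not exceed its rank. -/
def IsWeakMap {F E₁ E₂ : Type*} [Field F] [AddCommGroup E₁] [Module F E₁]
    [AddCommGroup E₂] [Module F E₂] (ρ₁ : Submodule F E₁ → ℕ)
    (ρ₂ : Submodule F E₂ → ℕ) (φ : E₁ → E₂) : Prop :=
  ∀ (V : Submodule F E₁) (W : Submodule F E₂), φ '' (V : Set E₁) = (W : Set E₂) → ρ₂ W ≤ ρ₁ V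

/-- A rank-preserving map: the rank of the image of any subspace equals its rank. -/
def IsRankPreserving {F E₁ E₂ : Type*} [Field F] [AddCommGroup E₁] [Module F E₁]
    [AddCommGroup E₂] [Module F E₂] (ρ₁ : Submodule F E₁ → ℕ)
    (ρ₂ : Submodule F E₂ → ℕ) (φ : E₁ → E₂) : Prop :=
  ∀ (V : Submodule F E₁) (W : Submodule F E₂), φ '' (V : Set E₁) = (W : Set E₂) → ρ₂ W = ρ₁ V

/-- A strong map: the preimage of every flat is a flat. -/
def IsStrongMap {F E₁ E₂ : Type*} [Field F] [AddCommGroup E₁] [Module F E₁]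
    [AddCommGroup E₂] [Module F E₂] (ρ₁ : Submodule F E₁ → ℕ)
    (ρ₂ : Submodule F E₂ → ℕ) (φ : E₁ → E₂) : Prop :=
  ∀ F₂ : Submodule F E₂, IsFlat ρ₂ F₂ →
    ∃ F₁ : Submodule F E₁, φ ⁻¹' (F₂ : Set E₂) = (F₁ : Set E₁) ∧ IsFlat ρ₁ F₁

section Aux

variable {F E : Type*} [Field F] [Fintype F] [AddCommGroup E] [Module F E]
  [FiniteDimensional F E]

lemma aux_finite_submodule : Finite (Submodule F E) := by
  have : Finite E := Module.finite_of_finite F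
  exact Finite.of_injective (fun V : Submodule F E => (V : Set E)) SetLike.coe_injective

lemma aux_card_pow (V : Submodule F E) :
    Nat.card V = Fintype.card F ^ finrank F V := by
  have : Finite E := Module.finite_of_finite F
  have : Fintype V := Fintype.ofFinite V
  rw [Nat.card_eq_fintype_card, card_eq_pow_finrank (K := F)]

lemma aux_span_le_one (x : E) : finrank F (span F {x}) ≤ 1 := by
  by_cases h : x = 0
  · rw [h, span_zero_singleton, finrank_bot]; omega
  · rw [finrank_span_singleton h]

variable {ρ : Submodule F E → ℕ}

lemma aux_rho_bot (h : IsQMatroid ρ) : ρ ⊥ = 0 :=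
  Nat.le_zero.mp (by simpa using h.1 ⊥)

/-- Closure: every subspace has a smallest flat above it, of equal rank. -/
lemma aux_exists_cl (h : IsQMatroid ρ) (V : Submodule F E) :
    ∃ G, V ≤ G ∧ ρ G = ρ V ∧ IsFlat ρ G ∧ ∀ G', IsFlat ρ G' → V ≤ G' → G ≤ G' := by
  obtain ⟨hdim, hmono, hsub⟩ := h
  have : Finite (Submodule F E) := aux_finite_submodule
  obtain ⟨G, hGS, hGmax⟩ := Set.Finite.exists_maximalFor (fun W : Submodule F E => finrank F W)
    {W : Submodule F E | V ≤ W ∧ ρ W = ρ V} (Set.toFinite _) ⟨V, le_rfl, rfl⟩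
  obtain ⟨hVG, hGr⟩ := hGS
  refine ⟨G, hVG, hGr, ?_, ?_⟩
  · intro W hW
    have h1 : ρ G ≤ ρ W := hmono _ _ hW.le
    rcases lt_or_eq_of_le h1 with h2 | h2
    · exact h2
    · exfalso
      have hWS : W ∈ {W : Submodule F E | V ≤ W ∧ ρ W = ρ V} := ⟨hVG.trans hW.le, by omega⟩
      have hfr := Submodule.finrank_lt_finrank_of_lt hW
      have : finrank F W ≤ finrank F G := hGmax hWS hfr.le
      omega
  · intro G' hG' hVG'
    by_contra hne
    have hlt : G' < G' ⊔ G := lt_of_le_of_ne le_sup_left (fun hEq => hne (hEq ▸ le_sup_right))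
    have hflat := hG' _ hlt
    have hsub2 := hsub G' G
    have hinf1 : ρ V ≤ ρ (G' ⊓ G) := hmono _ _ (le_inf hVG' hVG)
    have hinf2 : ρ (G' ⊓ G) ≤ ρ G := hmono _ _ inf_le_right
    omega

/-- If `G'` covers `G` in the lattice of flats, then the rank goes up by exactly one. -/
lemma aux_cover_rank (h : IsQMatroid ρ) {G G' : Submodule F E} (hG : IsFlat ρ G)
    (hG' : IsFlat ρ G') (hlt : G < G')
    (hcov : ∀ H, IsFlat ρ H → G < H → H ≤ G' → H = G') : ρ G' = ρ G + 1 := by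
  obtain ⟨x, hxG', hxG⟩ := SetLike.exists_of_lt hlt
  obtain ⟨H, hle, hrk, hHflat, hHmin⟩ := aux_exists_cl h (G ⊔ span F {x})
  obtain ⟨hdim, hmono, hsub⟩ := h
  have hGx : G ⊔ span F {x} ≤ G' := sup_le hlt.le ((span_singleton_le_iff_mem x G').mpr hxG')
  have hxH : x ∈ H := hle (Submodule.mem_sup_right (Submodule.mem_span_singleton_self x))
  have hGH : G < H := lt_of_le_of_ne (le_sup_left.trans hle) (fun hEq => hxG (hEq.symm ▸ hxH))
  have hHG' : H = G' := hcov H hHflat hGH (hHmin G' hG' hGx)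
  have h1 : ρ G < ρ G' := hG _ hlt
  have hsx : ρ (span F {x}) ≤ 1 := le_trans (hdim _) (aux_span_le_one x)
  have hsub2 := hsub G (span F {x})
  have hEq : ρ G' = ρ (G ⊔ span F {x}) := by rw [← hHG', hrk]
  omega

end Aux

section Key

variable {F E₁ E₂ : Type*} [Field F] [Fintype F]
  [AddCommGroup E₁] [Module F E₁] [FiniteDimensional F E₁]
  [AddCommGroup E₂] [Module F E₂] [FiniteDimensional F E₂]
  {ρ₁ : Submodule F E₁ → ℕ} {ρ₂ : Submodule F E₂ → ℕ}

lemma aux_key_flat (h₁ : IsQMatroid ρ₁) (h₂ : IsQMatroid ρ₂)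
    (e : Submodule F E₁ ≃o Submodule F E₂)
    (hf : ∀ G, IsFlat ρ₁ G → IsFlat ρ₂ (e G))
    (hg : ∀ H, IsFlat ρ₂ H → IsFlat ρ₁ (e.symm H)) :
    ∀ n (G : Submodule F E₁), finrank F G ≤ n → IsFlat ρ₁ G → ρ₂ (e G) = ρ₁ G := by
  intro n
  induction n with
  | zero =>
    intro G hGn hGflat
    have hGbot : G = ⊥ := Submodule.finrank_eq_zero.mp (Nat.le_zero.mp hGn)
    subst hGbot
    rw [OrderIso.map_bot, aux_rho_bot h₂, aux_rho_bot h₁]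
  | succ n ih =>
    intro G hGn hGflat
    by_cases hex : ∃ G', IsFlat ρ₁ G' ∧ G' < G
    · have : Finite (Submodule F E₁) := aux_finite_submodule
      obtain ⟨G', hG'S, hmax⟩ := Set.Finite.exists_maximalFor
        (fun W : Submodule F E₁ => finrank F W) {W | IsFlat ρ₁ W ∧ W < G} (Set.toFinite _)
        (by obtain ⟨G', h1, h2⟩ := hex; exact ⟨G', h1, h2⟩)
      obtain ⟨hG'flat, hG'lt⟩ := hG'S
      have hcov : ∀ H, IsFlat ρ₁ H → G' < H → H ≤ G → H = G := by
        intro H hH h1 h2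
        rcases lt_or_eq_of_le h2 with h3 | h3
        · exfalso
          have hfr := Submodule.finrank_lt_finrank_of_lt h1
          have : finrank F H ≤ finrank F G' := hmax (show H ∈ {W | IsFlat ρ₁ W ∧ W < G} from ⟨hH, h3⟩) hfr.le
          omega
        · exact h3
      have r1 : ρ₁ G = ρ₁ G' + 1 := aux_cover_rank h₁ hG'flat hGflat hG'lt hcov
      have hcov2 : ∀ H, IsFlat ρ₂ H → e G' < H → H ≤ e G → H = e G := by
        intro H hH hlt hle
        have h1 : G' < e.symm H := by
          have := e.symm.lt_iff_lt.mpr hlt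
          simpa using this
        have h2 : e.symm H ≤ G := by
          have := e.symm.le_iff_le.mpr hle
          simpa using this
        have h3 : e.symm H = G := hcov _ (hg H hH) h1 h2
        have : e (e.symm H) = e G := congrArg e h3
        simpa using this
      have r2 : ρ₂ (e G) = ρ₂ (e G') + 1 :=
        aux_cover_rank h₂ (hf G' hG'flat) (hf G hGflat) (e.lt_iff_lt.mpr hG'lt) hcov2
      have hG'n : finrank F G' ≤ n := by
        have h4 : finrank F G' < finrank F G := Submodule.finrank_lt_finrank_of_lt hG'lt
        omega
      rw [r1, r2, ih G' hG'n hG'flat]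
    · push_neg at hex
      obtain ⟨C, _, hC0, hCflat, hCmin⟩ := aux_exists_cl h₁ (⊥ : Submodule F E₁)
      have hCG : C ≤ G := hCmin G hGflat bot_le
      have hCG' : C = G := by
        rcases lt_or_eq_of_le hCG with h | h
        · exact absurd h (hex C hCflat)
        · exact h
      have r1 : ρ₁ G = 0 := by rw [← hCG', hC0, aux_rho_bot h₁]
      obtain ⟨C₂, _, hC₂0, hC₂flat, hC₂min⟩ := aux_exists_cl h₂ (⊥ : Submodule F E₂)
      have hle1 : C₂ ≤ e G := hC₂min _ (hf G hGflat) bot_le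
      have hle2 : e.symm C₂ ≤ G := by
        have := e.symm.le_iff_le.mpr hle1
        simpa using this
      have h4 : e.symm C₂ = G := by
        rcases lt_or_eq_of_le hle2 with h | h
        · exact absurd h (hex _ (hg C₂ hC₂flat))
        · exact h
      have h5 : C₂ = e G := by
        have := congrArg e h4
        simpa using this
      rw [← h5, hC₂0, aux_rho_bot h₂, r1]

lemma aux_key (h₁ : IsQMatroid ρ₁) (h₂ : IsQMatroid ρ₂)
    (e : Submodule F E₁ ≃o Submodule F E₂)
    (hf : ∀ G, IsFlat ρ₁ G → IsFlat ρ₂ (e G))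
    (hg : ∀ H, IsFlat ρ₂ H → IsFlat ρ₁ (e.symm H)) :
    ∀ V, ρ₂ (e V) = ρ₁ V := by
  intro V
  obtain ⟨G, hVG, hGr, hGflat, hGmin⟩ := aux_exists_cl h₁ V
  obtain ⟨H, hH1, hH2, hHflat, hHmin⟩ := aux_exists_cl h₂ (e V)
  have hEq : H = e G := by
    apply le_antisymm
    · exact hHmin _ (hf G hGflat) (e.le_iff_le.mpr hVG)
    · have h1 : V ≤ e.symm H := by
        have := e.symm.le_iff_le.mpr hH1
        simpa using this
      have h2 : G ≤ e.symm H := hGmin _ (hg H hHflat) h1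
      have := e.le_iff_le.mpr h2
      simpa using this
  have h3 := aux_key_flat h₁ h₂ e hf hg (finrank F G) G le_rfl hGflat
  rw [← hGr, ← h3, ← hEq, hH2]

/-- A bijective L-map induces an order isomorphism on subspace lattices. -/
lemma aux_exists_orderIso (φ : E₁ → E₂) (hφ : IsLMap F φ) (hbij : Function.Bijective φ) :
    ∃ e : Submodule F E₁ ≃o Submodule F E₂, ∀ V : Submodule F E₁, φ '' (V : Set E₁) = ((e V : Submodule F E₂) : Set E₂) := by
  classical
  choose e₀ he₀ using hφ
  have hmemIff : ∀ (V : Submodule F E₁) (x : E₁), φ x ∈ e₀ V ↔ x ∈ V := by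
    intro V x
    constructor
    · intro h
      have h2 : φ x ∈ (e₀ V : Set E₂) := h
      rw [← he₀ V] at h2
      obtain ⟨y, hy, hxy⟩ := h2
      rwa [← hbij.1 hxy]
    · intro h
      have h2 : φ x ∈ (e₀ V : Set E₂) := by rw [← he₀ V]; exact ⟨x, h, rfl⟩
      exact h2
  have hmonoIff : ∀ V V', e₀ V ≤ e₀ V' ↔ V ≤ V' := by
    intro V V'
    constructor
    · intro h x hx
      exact (hmemIff V' x).mp (h ((hmemIff V x).mpr hx))
    · intro h
      rw [← SetLike.coe_subset_coe, ← he₀, ← he₀]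
      exact Set.image_mono h
  have hrank : ∀ V, finrank F (e₀ V) = finrank F V := by
    intro V
    have h2 : Nat.card (e₀ V) = Nat.card V := by
      refine (Nat.card_congr ?_).symm
      exact (Equiv.Set.image φ (V : Set E₁) hbij.1).trans (Equiv.setCongr (he₀ V))
    rw [aux_card_pow, aux_card_pow] at h2
    exact Nat.pow_right_injective Fintype.one_lt_card h2
  have hbot : e₀ ⊥ = ⊥ := by
    have h0 : finrank F (e₀ (⊥ : Submodule F E₁)) = 0 := by
      rw [hrank]; exact finrank_bot F E₁
    exact Submodule.finrank_eq_zero.mp h0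
  have hsurj : ∀ W : Submodule F E₂, ∃ V, e₀ V = W := by
    intro W
    have : Finite (Submodule F E₁) := aux_finite_submodule
    obtain ⟨V, hVS, hVmax⟩ := Set.Finite.exists_maximalFor
      (fun U : Submodule F E₁ => finrank F U) {U | e₀ U ≤ W} (Set.toFinite _)
      ⟨⊥, by simp [hbot]⟩
    refine ⟨V, ?_⟩
    by_contra hne
    have hlt : e₀ V < W := lt_of_le_of_ne hVS hne
    obtain ⟨y, hyW, hyV⟩ := SetLike.exists_of_lt hlt
    obtain ⟨x, rfl⟩ := hbij.2 y
    have hxV : x ∉ V := fun hx => hyV ((hmemIff V x).mpr hx)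
    set V' := V ⊔ span F {x} with hV'
    have hxV' : x ∈ V' := Submodule.mem_sup_right (Submodule.mem_span_singleton_self x)
    have hVltV' : V < V' := lt_of_le_of_ne le_sup_left (fun hEq => hxV (hEq.symm ▸ hxV'))
    have hle1 : e₀ V ≤ e₀ V' := (hmonoIff V V').mpr le_sup_left
    have hmem : φ x ∈ e₀ V' := (hmemIff V' x).mpr hxV'
    have hle2 : e₀ V ⊔ span F {φ x} ≤ e₀ V' :=
      sup_le hle1 ((span_singleton_le_iff_mem _ _).mpr hmem)
    have hltsup : e₀ V < e₀ V ⊔ span F {φ x} := by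
      apply lt_of_le_of_ne le_sup_left
      intro hEq
      apply hyV
      rw [hEq]
      exact Submodule.mem_sup_right (Submodule.mem_span_singleton_self (φ x))
    have hf1 : finrank F (e₀ V) + 1 ≤ finrank F (e₀ V ⊔ span F {φ x} : Submodule F E₂) :=
      Submodule.finrank_lt_finrank_of_lt hltsup
    have hf2 : finrank F V' ≤ finrank F V + 1 := by
      have h3 := Submodule.finrank_sup_add_finrank_inf_eq V (span F {x})
      rw [← hV'] at h3
      have h4 := aux_span_le_one (F := F) x
      omega
    have hEqsup : e₀ V ⊔ span F {φ x} = e₀ V' := by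
      apply Submodule.eq_of_le_of_finrank_le hle2
      rw [hrank]
      rw [hrank] at hf1
      omega
    have hV'S : e₀ V' ≤ W := by
      rw [← hEqsup]
      exact sup_le hlt.le ((span_singleton_le_iff_mem _ _).mpr hyW)
    have hfr := Submodule.finrank_lt_finrank_of_lt hVltV'
    have : finrank F V' ≤ finrank F V := hVmax hV'S hfr.le
    omega
  choose e' he' using hsurj
  have einj : Function.Injective e₀ := fun a b h =>
    le_antisymm ((hmonoIff a b).mp h.le) ((hmonoIff b a).mp h.ge)
  exact ⟨{ toFun := e₀, invFun := e', left_inv := fun V => einj (he' (e₀ V)),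
           right_inv := he', map_rel_iff' := fun {a b} => hmonoIff a b }, he₀⟩

end Key

/-- For a bijective `L`-map between `q`-matroids: being weak in both directions,
rank-preserving, and strong in both directions are all equivalent. -/
theorem stmt12 {F : Type*} [Field F] [Fintype F]
    {E₁ E₂ : Type*} [AddCommGroup E₁] [Module F E₁] [FiniteDimensional F E₁]
    [AddCommGroup E₂] [Module F E₂] [FiniteDimensional F E₂]
    (ρ₁ : Submodule F E₁ → ℕ) (ρ₂ : Submodule F E₂ → ℕ)
    (h₁ : IsQMatroid ρ₁) (h₂ : IsQMatroid ρ₂)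
    (φ : E₁ → E₂) (hφ : IsLMap F φ) (hbij : Function.Bijective φ) :
    ((IsWeakMap ρ₁ ρ₂ φ ∧ IsWeakMap ρ₂ ρ₁ (Function.invFun φ)) ↔ IsRankPreserving ρ₁ ρ₂ φ) ∧
    (IsRankPreserving ρ₁ ρ₂ φ ↔
      (IsStrongMap ρ₁ ρ₂ φ ∧ IsStrongMap ρ₂ ρ₁ (Function.invFun φ))) := by
  obtain ⟨e, himg⟩ := aux_exists_orderIso φ hφ hbij
  have hpre : ∀ S : Set E₁, (Function.invFun φ) ⁻¹' S = φ '' S := by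
    intro S
    ext y
    simp only [Set.mem_preimage, Set.mem_image]
    constructor
    · intro h
      exact ⟨Function.invFun φ y, h, Function.rightInverse_invFun hbij.2 y⟩
    · rintro ⟨x, hx, rfl⟩
      rwa [Function.leftInverse_invFun hbij.1 x]
  have hsymmimg : ∀ W : Submodule F E₂, φ '' ((e.symm W : Submodule F E₁) : Set E₁) = (W : Set E₂) := by
    intro W
    rw [himg]
    exact congrArg (fun U : Submodule F E₂ => (U : Set E₂)) (e.apply_symm_apply W)
  constructor
  · constructor
    · rintro ⟨hw1, hw2⟩ V W hVW
      refine le_antisymm (hw1 V W hVW) ?_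
      apply hw2 W V
      rw [← hVW, Set.image_image]
      have hc : ∀ a ∈ (V : Set E₁), Function.invFun φ (φ a) = id a :=
        fun a _ => Function.leftInverse_invFun hbij.1 a
      rw [Set.image_congr hc, Set.image_id]
    · intro hrp
      refine ⟨fun V W h => (hrp V W h).le, ?_⟩
      intro W V h
      have h2 : φ '' (V : Set E₁) = (W : Set E₂) := by
        rw [← h, Set.image_image]
        have hc : ∀ a ∈ (W : Set E₂), φ (Function.invFun φ a) = id a :=
          fun a _ => Function.rightInverse_invFun hbij.2 a
        rw [Set.image_congr hc, Set.image_id]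
      exact (hrp V W h2).ge
  · constructor
    · intro hrp
      have hre : ∀ V, ρ₂ (e V) = ρ₁ V := fun V => hrp V (e V) (himg V)
      constructor
      · intro F₂ hF₂
        refine ⟨e.symm F₂, ?_, ?_⟩
        · rw [← hsymmimg F₂, Set.preimage_image_eq _ hbij.1]
        · intro W hW
          have h1 : F₂ < e W := by
            have := e.lt_iff_lt.mpr hW
            rwa [e.apply_symm_apply] at this
          have h2 := hF₂ _ h1
          have h3 : ρ₂ (e (e.symm F₂)) = ρ₁ (e.symm F₂) := hre _
          rw [e.apply_symm_apply] at h3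
          rw [← h3, ← hre W]
          exact h2
      · intro F₁ hF₁
        refine ⟨e F₁, ?_, ?_⟩
        · rw [hpre, himg]
        · intro W hW
          have h1 : F₁ < e.symm W := by
            have := e.symm.lt_iff_lt.mpr hW
            rwa [e.symm_apply_apply] at this
          have h2 := hF₁ _ h1
          have h3 : ρ₂ (e (e.symm W)) = ρ₁ (e.symm W) := hre _
          rw [e.apply_symm_apply] at h3
          rw [← hre F₁] at h2
          rw [← h3] at h2
          exact h2
    · rintro ⟨hs1, hs2⟩
      have hf : ∀ G, IsFlat ρ₁ G → IsFlat ρ₂ (e G) := by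
        intro G hG
        obtain ⟨F₂, hF₂eq, hF₂flat⟩ := hs2 G hG
        have : (F₂ : Set E₂) = ((e G : Submodule F E₂) : Set E₂) := by
          rw [← hF₂eq, hpre, himg]
        rwa [SetLike.coe_injective this] at hF₂flat
      have hg : ∀ H, IsFlat ρ₂ H → IsFlat ρ₁ (e.symm H) := by
        intro H hH
        obtain ⟨F₁, hF₁eq, hF₁flat⟩ := hs1 H hH
        have : (F₁ : Set E₁) = ((e.symm H : Submodule F E₁) : Set E₁) := by
          rw [← hF₁eq, ← hsymmimg H, Set.preimage_image_eq _ hbij.1]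
        rwa [SetLike.coe_injective this] at hF₁flat
      have hkey := aux_key h₁ h₂ e hf hg
      intro V W hVW
      have hWe : W = e V := SetLike.coe_injective (by rw [← hVW, himg])
      rw [hWe, hkey V]
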